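/- With W_n = a·U_n + b·V_n and Ω = a² + 4b² − b²p², the case m = 2 of the main identity holds: W_n^{2k} + W_{n+2}^{2k} = Σ_{r=0}^{k} θ_{k,r}(2) · Ω^{k−r} · W_n^r · W_{n+2}^r, where θ_{k,r}(2) = Σ_{0 ≤ 2j ≤ k, 2j ≤ r} (−1)^j · k·(k−j−1)! / (j!·(k−r)!·(r−2j)!) · (p²−2)^{r−2j} · p^{2k−2r}. -/

import Mathlib

open Finset

def Ecoef (k j : ℕ) : ℕ :=
  (k - j).choose j + if 1 ≤ j ∧ j < k then (k - j - 1).choose (j - 1) else 0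

lemma Ecoef_zero {k j : ℕ} (h : k < 2 * j) : Ecoef k j = 0 := by
  unfold Ecoef
  have hj : 1 ≤ j := by omega
  rcases lt_or_ge j k with hjk | hjk
  · have h1 : k - j < j := by omega
    have h2 : k - j - 1 < j - 1 := by omega
    simp [Nat.choose_eq_zero_of_lt h1, Nat.choose_eq_zero_of_lt h2, hj, hjk]
  · have h1 : k - j = 0 := by omega
    simp [h1, Nat.choose_eq_zero_of_lt (show 0 < j by omega)]
    omega

lemma Ecoef_zero' (k : ℕ) : Ecoef k 0 = 1 := by simp [Ecoef]

lemma Ecoef_rec {k j : ℕ} (h : j < k) :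
    Ecoef (k + 2) (j + 1) = Ecoef (k + 1) (j + 1) + Ecoef k j := by
  unfold Ecoef
  have g1 : (1 ≤ j + 1 ∧ j + 1 < k + 2) := by omega
  have g2 : (1 ≤ j + 1 ∧ j + 1 < k + 1) := by omega
  rw [if_pos g1, if_pos g2]
  have e1 : k + 2 - (j + 1) = (k - j) + 1 := by omega
  have e2 : k + 2 - (j + 1) - 1 = k - j := by omega
  have e3 : k + 1 - (j + 1) = k - j := by omega
  have e4 : k + 1 - (j + 1) - 1 = k - j - 1 := by omega
  have e5 : j + 1 - 1 = j := by omega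
  rw [e2, e1, e4, e3, e5]
  rw [Nat.choose_succ_succ' (k - j) j]
  rcases Nat.eq_zero_or_pos j with rfl | hj
  · simp
    omega
  · have g3 : (1 ≤ j ∧ j < k) := ⟨hj, h⟩
    rw [if_pos g3]
    have e6 : k - j = (k - j - 1) + 1 := by omega
    have e7 : j = (j - 1) + 1 := by omega
    rw [show (k-j).choose j = ((k-j-1)+1).choose ((j-1)+1) by rw [← e6, ← e7]]
    rw [Nat.choose_succ_succ' (k - j - 1) (j - 1),
      show j - 1 + 1 = j by omega]
    omega

lemma waring (s q x y : ℝ) (hs : x + y = s) (hq : x * y = q) :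
    ∀ k : ℕ, 1 ≤ k → x ^ k + y ^ k =
      ∑ j ∈ Finset.range (k + 1),
        (-1 : ℝ) ^ j * (Ecoef k j : ℝ) * s ^ (k - 2 * j) * q ^ j := by
  subst hs hq
  intro k
  induction k using Nat.strong_induction_on with
  | _ k ih =>
    intro hk
    match k, hk with
    | 1, _ =>
      simp [Finset.sum_range_succ, Ecoef]
    | 2, _ =>
      simp [Finset.sum_range_succ, Ecoef]
      ring
    | (m+3), _ =>
      have h1 := ih (m+2) (by omega) (by omega)
      have h2 := ih (m+1) (by omega) (by omega)
      have hx : x ^ (m+3) + y ^ (m+3) =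
          (x + y) * (x ^ (m+2) + y ^ (m+2)) - (x*y) * (x ^ (m+1) + y ^ (m+1)) := by
        ring
      rw [hx, h1, h2, Finset.mul_sum, Finset.mul_sum]
      set s := x + y
      set q := x * y
      -- pad the q-sum from range (m+2) to range (m+3)
      have hpad : ∑ j ∈ Finset.range (m+3), q * ((-1:ℝ)^j * (Ecoef (m+1) j : ℝ) * s ^ (m+1-2*j) * q ^ j)
          = ∑ j ∈ Finset.range (m+2), q * ((-1:ℝ)^j * (Ecoef (m+1) j : ℝ) * s ^ (m+1-2*j) * q ^ j) := by
        rw [Finset.sum_range_succ (fun j => q * ((-1:ℝ)^j * (Ecoef (m+1) j : ℝ) * s ^ (m+1-2*j) * q ^ j)) (m+2)]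
        rw [Ecoef_zero (show m+1 < 2*(m+2) by omega)]
        simp
      rw [← hpad]
      rw [Finset.sum_range_succ' (fun j => (-1:ℝ)^j * (Ecoef (m+3) j : ℝ) * s ^ (m+3-2*j) * q ^ j) (m+3)]
      rw [Finset.sum_range_succ' (fun j => s * ((-1:ℝ)^j * (Ecoef (m+2) j : ℝ) * s ^ (m+2-2*j) * q ^ j)) (m+2)]
      have hzero : ∀ j ∈ Finset.range (m+3),
          (s * ((-1:ℝ)^(j+1) * (Ecoef (m+2) (j+1) : ℝ) * s ^ (m+2-2*(j+1)) * q ^ (j+1))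
            - q * ((-1:ℝ)^j * (Ecoef (m+1) j : ℝ) * s ^ (m+1-2*j) * q ^ j))
          = (-1:ℝ)^(j+1) * (Ecoef (m+3) (j+1) : ℝ) * s ^ (m+3-2*(j+1)) * q ^ (j+1) := by
        intro j hj
        rcases le_or_gt (2*j) m with hle | hlt
        · -- main case: 2j ≤ m
          have hrec := Ecoef_rec (show j < m+1 by omega)
          rw [show m+3-2*(j+1) = m+1-2*j by omega, show m+2-2*(j+1) = m-2*j by omega,
            hrec, show m+1-2*j = (m-2*j)+1 by omega]
          push_cast
          ring
        · rcases eq_or_lt_of_le (show m+1 ≤ 2*j by omega) with heq | hlt2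
          · -- boundary case 2j = m+1
            have hrec := Ecoef_rec (show j < m+1 by omega)
            rw [Ecoef_zero (show m+2 < 2*(j+1) by omega)] at hrec
            rw [hrec, Ecoef_zero (show m+2 < 2*(j+1) by omega),
              show m+3-2*(j+1) = 0 by omega, show m+1-2*j = 0 by omega]
            push_cast
            ring
          · -- all-zero case 2j ≥ m+2
            rw [Ecoef_zero (show m+3 < 2*(j+1) by omega),
              Ecoef_zero (show m+2 < 2*(j+1) by omega),
              Ecoef_zero (show m+1 < 2*j by omega)]
            push_cast
            ring
      have hsum : ∑ j ∈ Finset.range (m+3),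
          (s * ((-1:ℝ)^(j+1) * (Ecoef (m+2) (j+1) : ℝ) * s ^ (m+2-2*(j+1)) * q ^ (j+1))
            - q * ((-1:ℝ)^j * (Ecoef (m+1) j : ℝ) * s ^ (m+1-2*j) * q ^ j))
          = ∑ j ∈ Finset.range (m+3),
            (-1:ℝ)^(j+1) * (Ecoef (m+3) (j+1) : ℝ) * s ^ (m+3-2*(j+1)) * q ^ (j+1) :=
        Finset.sum_congr rfl hzero
      rw [Finset.sum_sub_distrib] at hsum
      have hc : s * ((-1:ℝ)^0 * (Ecoef (m+2) 0 : ℝ) * s ^ (m+2-2*0) * q ^ 0)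
          = (-1:ℝ)^0 * (Ecoef (m+3) 0 : ℝ) * s ^ (m+3-2*0) * q ^ 0 := by
        simp [Ecoef_zero']
        ring
      have hpad2 : ∑ j ∈ Finset.range (m+3),
            s * ((-1:ℝ)^(j+1) * (Ecoef (m+2) (j+1) : ℝ) * s ^ (m+2-2*(j+1)) * q ^ (j+1))
          = ∑ j ∈ Finset.range (m+2),
            s * ((-1:ℝ)^(j+1) * (Ecoef (m+2) (j+1) : ℝ) * s ^ (m+2-2*(j+1)) * q ^ (j+1)) := by
        rw [Finset.sum_range_succ
          (fun j => s * ((-1:ℝ)^(j+1) * (Ecoef (m+2) (j+1) : ℝ) * s ^ (m+2-2*(j+1)) * q ^ (j+1))) (m+2)]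
        rw [Ecoef_zero (show m+2 < 2*(m+2+1) by omega)]
        simp
      rw [← hpad2]
      linarith [hsum, hc]

lemma coeff_eq (k r j : ℕ) (hk : 1 ≤ k) (hr : r ≤ k) (hj : 2 * j ≤ r) :
    (k : ℝ) * ((k - j - 1).factorial : ℝ) /
        ((j.factorial : ℝ) * ((k - r).factorial : ℝ) * ((r - 2 * j).factorial : ℝ))
      = (Ecoef k j : ℝ) * (((k - 2 * j).choose (r - 2 * j) : ℕ) : ℝ) := by
  obtain ⟨s, rfl⟩ : ∃ s, r = 2 * j + s := ⟨r - 2 * j, by omega⟩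
  obtain ⟨m, rfl⟩ : ∃ m, k = 2 * j + s + m := ⟨k - (2 * j + s), by omega⟩
  have hfs : (s.factorial : ℝ) ≠ 0 := Nat.cast_ne_zero.mpr (Nat.factorial_ne_zero s)
  have hfm : (m.factorial : ℝ) ≠ 0 := Nat.cast_ne_zero.mpr (Nat.factorial_ne_zero m)
  rcases Nat.eq_zero_or_pos j with rfl | hjpos
  · -- j = 0
    simp only [Ecoef_zero']
    rw [show 2 * 0 + s + m - 0 - 1 = s + m - 1 by omega,
      show 2 * 0 + s + m - (2 * 0 + s) = m by omega,
      show 2 * 0 + s - 2 * 0 = s by omega,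
      show 2 * 0 + s + m - 2 * 0 = s + m by omega]
    rw [Nat.cast_choose ℝ (show s ≤ s + m by omega),
      show s + m - s = m by omega]
    have hf : ((s + m).factorial : ℝ) = ((s + m : ℕ) : ℝ) * ((s + m - 1).factorial : ℝ) := by
      exact_mod_cast congrArg (Nat.cast (R := ℝ))
        (Nat.mul_factorial_pred (show s + m ≠ 0 by omega)).symm
    rw [hf]
    have h0 : ((0:ℕ).factorial : ℝ) = 1 := by norm_num
    rw [h0]
    push_cast
    have hsm : ((s:ℝ) + m) ≠ 0 := by
      have h : 0 < s + m := by omega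
      have h2 := Nat.cast_pos (α := ℝ).mpr h
      push_cast at h2
      linarith
    field_simp
    ring
  · -- j ≥ 1
    obtain ⟨t, rfl⟩ : ∃ t, j = t + 1 := ⟨j - 1, by omega⟩
    have hguard : 1 ≤ t + 1 ∧ t + 1 < 2 * (t + 1) + s + m := by omega
    unfold Ecoef
    rw [if_pos hguard]
    rw [show 2*(t+1)+s+m - (t+1) - 1 = t+s+m by omega,
      show 2*(t+1)+s+m - (t+1) = t+1+s+m by omega,
      show t+1-1 = t by omega,
      show 2*(t+1)+s+m - 2*(t+1) = s+m by omega,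
      show 2*(t+1)+s - 2*(t+1) = s by omega,
      show 2*(t+1)+s+m - (2*(t+1)+s) = m by omega]
    push_cast
    rw [Nat.cast_choose ℝ (show t+1 ≤ t+1+s+m by omega),
      Nat.cast_choose ℝ (show t ≤ t+s+m by omega),
      Nat.cast_choose ℝ (show s ≤ s+m by omega),
      show t+1+s+m - (t+1) = s+m by omega,
      show t+s+m - t = s+m by omega,
      show s+m-s = m by omega]
    have hf1 : ((t+1+s+m).factorial : ℝ) = (t+1+s+m) * ((t+s+m).factorial : ℝ) := by
      rw [show t+1+s+m = (t+s+m)+1 by omega, Nat.factorial_succ]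
      push_cast
      ring
    have hf2 : ((t+1).factorial : ℝ) = (t+1) * (t.factorial : ℝ) := by
      rw [Nat.factorial_succ]
      push_cast [-Nat.cast_ofNat]
      ring
    rw [hf1, hf2]
    have hft : (t.factorial : ℝ) ≠ 0 := Nat.cast_ne_zero.mpr (Nat.factorial_ne_zero t)
    have hfsm : ((s+m).factorial : ℝ) ≠ 0 := Nat.cast_ne_zero.mpr (Nat.factorial_ne_zero (s+m))
    have ht1 : ((t:ℝ) + 1) ≠ 0 := by positivity
    field_simp
    ring

/-- The `m = 2` case of the main identity, with
`θ_{k,r}(2) = Σ_{0 ≤ 2j ≤ r} (−1)ʲ k(k−j−1).factorial/(j!(k−r).factorial(r−2j).factorial) (p²−2)^{r−2j} p^{2k−2r}`. -/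
theorem stmt_6 (p a b : ℝ) (U V W : ℕ → ℝ)
    (hU0 : U 0 = 0) (hU1 : U 1 = 1)
    (hUrec : ∀ n, U (n + 2) = p * U (n + 1) - U n)
    (hV0 : V 0 = 2) (hV1 : V 1 = p)
    (hVrec : ∀ n, V (n + 2) = p * V (n + 1) - V n)
    (hW : ∀ n, W n = a * U n + b * V n)
    (Ω : ℝ) (hΩ : Ω = a ^ 2 + 4 * b ^ 2 - b ^ 2 * p ^ 2) :
    ∀ (k : ℕ), 1 ≤ k → ∀ n : ℕ,
      W n ^ (2 * k) + W (n + 2) ^ (2 * k) =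
        ∑ r ∈ Finset.range (k + 1),
          (∑ j ∈ Finset.range (r / 2 + 1),
            ((-1 : ℝ) ^ j * k * (k - j - 1).factorial /
              (j.factorial * (k - r).factorial * (r - 2 * j).factorial)) *
              (p ^ 2 - 2) ^ (r - 2 * j) * p ^ (2 * k - 2 * r)) *
            Ω ^ (k - r) * W n ^ r * W (n + 2) ^ r := by
  intro k hk n
  have hWrec : ∀ n, W (n + 2) = p * W (n + 1) - W n := by
    intro n; rw [hW, hW, hW, hUrec, hVrec]; ring
  have key : ∀ n, W n ^ 2 + W (n + 2) ^ 2
      = (p ^ 2 - 2) * (W n * W (n + 2)) + p ^ 2 * Ω := by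
    intro n
    induction n with
    | zero =>
      have h0 : W 0 = 2 * b := by rw [hW, hU0, hV0]; ring
      have h1 : W 1 = a + b * p := by rw [hW, hU1, hV1]; ring
      have h2 : W 2 = p * W 1 - W 0 := hWrec 0
      rw [show (0:ℕ) + 2 = 2 from rfl, h2, h1, h0, hΩ]; ring
    | succ n ihn =>
      have h3 : W (n + 3) = p * W (n + 2) - W (n + 1) := hWrec (n + 1)
      have h0 : W n = p * W (n + 1) - W (n + 2) := by have := hWrec n; linarith
      rw [h0] at ihn
      rw [show n + 1 + 2 = n + 3 from rfl, h3]
      linear_combination ihn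
  set A : ℝ := p ^ 2 - 2 with hA
  set B : ℝ := p ^ 2 * Ω with hB
  set P : ℝ := W n * W (n + 2) with hP
  have hwar := waring (A * P + B) (P ^ 2) (W n ^ 2) (W (n + 2) ^ 2)
    (by rw [key n]) (by rw [hP]; ring) k hk
  rw [show W n ^ (2 * k) = (W n ^ 2) ^ k by rw [← pow_mul],
    show W (n + 2) ^ (2 * k) = (W (n + 2) ^ 2) ^ k by rw [← pow_mul], hwar]
  -- restrict the sum to j ≤ k/2
  have hres : ∑ j ∈ Finset.range (k / 2 + 1),
        (-1:ℝ) ^ j * (Ecoef k j : ℝ) * (A * P + B) ^ (k - 2 * j) * (P ^ 2) ^ j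
      = ∑ j ∈ Finset.range (k + 1),
        (-1:ℝ) ^ j * (Ecoef k j : ℝ) * (A * P + B) ^ (k - 2 * j) * (P ^ 2) ^ j := by
    apply Finset.sum_subset
    · apply Finset.range_subset_range.mpr; omega
    · intro j hj1 hj2
      simp only [Finset.mem_range] at hj1 hj2
      rw [Ecoef_zero (show k < 2 * j by omega)]
      simp
  rw [← hres]
  -- binomial expansion of (A*P + B)^(k-2j)
  have hexp : ∀ j ∈ Finset.range (k / 2 + 1),
      (-1:ℝ) ^ j * (Ecoef k j : ℝ) * (A * P + B) ^ (k - 2 * j) * (P ^ 2) ^ j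
      = ∑ i ∈ Finset.range (k - 2 * j + 1),
          (-1:ℝ) ^ j * (Ecoef k j : ℝ) *
            ((A * P) ^ i * B ^ (k - 2 * j - i) * (((k - 2 * j).choose i : ℕ) : ℝ)) *
            (P ^ 2) ^ j := by
    intro j hj
    rw [add_pow, Finset.mul_sum, Finset.sum_mul]
  rw [Finset.sum_congr rfl hexp]
  -- reindex the double sum
  have hbij : ∑ j ∈ Finset.range (k / 2 + 1), ∑ i ∈ Finset.range (k - 2 * j + 1),
        (-1:ℝ) ^ j * (Ecoef k j : ℝ) *
          ((A * P) ^ i * B ^ (k - 2 * j - i) * (((k - 2 * j).choose i : ℕ) : ℝ)) *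
          (P ^ 2) ^ j
      = ∑ r ∈ Finset.range (k + 1), ∑ j ∈ Finset.range (r / 2 + 1),
        (-1:ℝ) ^ j * (Ecoef k j : ℝ) *
          ((A * P) ^ (r - 2 * j) * B ^ (k - r) * (((k - 2 * j).choose (r - 2 * j) : ℕ) : ℝ)) *
          (P ^ 2) ^ j := by
    rw [Finset.sum_sigma', Finset.sum_sigma']
    apply Finset.sum_nbij' (i := fun x => (⟨x.2 + 2 * x.1, x.1⟩ : (_ : ℕ) × ℕ))
      (j := fun x => (⟨x.2, x.1 - 2 * x.2⟩ : (_ : ℕ) × ℕ))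
    · intro x hx
      simp only [Finset.mem_sigma, Finset.mem_range] at hx ⊢
      omega
    · intro x hx
      simp only [Finset.mem_sigma, Finset.mem_range] at hx ⊢
      omega
    · rintro ⟨x1, x2⟩ hx
      simp only [Finset.mem_sigma, Finset.mem_range] at hx
      simp only [Sigma.mk.inj_iff, heq_eq_eq]
      exact ⟨trivial, by omega⟩
    · rintro ⟨x1, x2⟩ hx
      simp only [Finset.mem_sigma, Finset.mem_range] at hx
      simp only [Sigma.mk.inj_iff, heq_eq_eq]
      exact ⟨by omega, trivial⟩
    · rintro ⟨x1, x2⟩ hx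
      simp only [Finset.mem_sigma, Finset.mem_range] at hx
      simp only []
      rw [show x2 + 2 * x1 - 2 * x1 = x2 by omega,
        show k - (x2 + 2 * x1) = k - 2 * x1 - x2 by omega]
  rw [hbij]
  -- final term-by-term comparison
  apply Finset.sum_congr rfl
  intro r hr
  simp only [Finset.mem_range] at hr
  rw [Finset.sum_mul, Finset.sum_mul, Finset.sum_mul]
  apply Finset.sum_congr rfl
  intro j hj
  simp only [Finset.mem_range] at hj
  have hrk : r ≤ k := by omega
  have hjr : 2 * j ≤ r := by omega
  have hco := coeff_eq k r j hk hrk hjr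
  have hBpow : B ^ (k - r) = p ^ (2 * k - 2 * r) * Ω ^ (k - r) := by
    rw [hB, mul_pow, ← pow_mul]
    congr 2
    omega
  have hPpow : P ^ (r - 2 * j) * P ^ (2 * j) = P ^ r := by
    rw [← pow_add]
    congr 1
    omega
  rw [mul_pow A P, hBpow, show (P ^ 2) ^ j = P ^ (2 * j) by rw [← pow_mul], hP]
  calc (-1:ℝ) ^ j * (Ecoef k j : ℝ) *
        (A ^ (r-2*j) * (W n * W (n+2)) ^ (r-2*j) * (p ^ (2*k-2*r) * Ω ^ (k-r)) *
          (((k-2*j).choose (r-2*j) : ℕ) : ℝ)) * (W n * W (n+2)) ^ (2*j)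
      = ((-1:ℝ) ^ j * ((Ecoef k j : ℝ) * (((k-2*j).choose (r-2*j) : ℕ) : ℝ))) *
          A ^ (r-2*j) * p ^ (2*k-2*r) * Ω ^ (k-r) *
          ((W n * W (n+2)) ^ (r-2*j) * (W n * W (n+2)) ^ (2*j)) := by ring
    _ = _ := by
        rw [← hco, hPpow, hP, mul_pow (W n) (W (n+2)) r]
        ring
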